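/- Assume S_F ≠ ∅. Then F is topologically mixing on the closure of graph ρ: for every pair of nonempty relatively open subsets U and V of cl(graph ρ) there exists n_0 such that F^n(V) ∩ U ≠ ∅ for all n ≥ n_0. -/

import Mathlib

open Set Function Filter Topology

noncomputable section

/-- The shift map on two-sided sequences. -/
def shiftMap {k : ℕ} (θ : ℤ → Fin k) : ℤ → Fin k := fun i => θ (i + 1)

/-- The step skew product `F(θ, x) = (σ θ, f_{θ₀} x)`. -/
def skewProd {k : ℕ} {M : Type*} (f : Fin k → M → M) :
    (ℤ → Fin k) × M → (ℤ → Fin k) × M :=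
  fun p => (shiftMap p.1, f (p.1 0) p.2)

/-- Backward composition `f_{θ₋₁} ∘ ⋯ ∘ f_{θ₋ₙ}`. -/
def bcomp {k : ℕ} {M : Type*} (f : Fin k → M → M) (θ : ℤ → Fin k) : ℕ → M → M
  | 0 => id
  | n + 1 => bcomp f θ n ∘ f (θ (-((n : ℤ) + 1)))

/-- The spine `I_θ = ⋂_{n ≥ 1} f_{θ₋₁} ∘ ⋯ ∘ f_{θ₋ₙ}(M)`. -/
def spine {k : ℕ} {M : Type*} (f : Fin k → M → M) (θ : ℤ → Fin k) : Set M :=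
  ⋂ n : ℕ, bcomp f θ (n + 1) '' Set.univ

/-- The set of weakly hyperbolic sequences: those `θ` whose spine is a singleton. -/
def weakHyp {k : ℕ} {M : Type*} (f : Fin k → M → M) : Set (ℤ → Fin k) :=
  {θ | ∃ x : M, spine f θ = {x}}

/-- The ω-limit set of a point `z` under iteration of `F`: limits of subsequences
`F^{n_j}(z)` with `n_j → ∞`. -/
def omegaLim {α : Type*} [TopologicalSpace α] (F : α → α) (z : α) : Set α :=
  {w | ∃ φ : ℕ → ℕ, StrictMono φ ∧ Tendsto (fun j => F^[φ j] z) atTop (𝓝 w)}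


section Aux
variable {k : ℕ} {M : Type*} [MetricSpace M] [CompactSpace M] [Nonempty M]

lemma bcomp_continuous (f : Fin k → M → M) (hf : ∀ i, Continuous (f i))
    (θ : ℤ → Fin k) (n : ℕ) : Continuous (bcomp f θ n) := by
  induction n with
  | zero => exact continuous_id
  | succ n ih => exact ih.comp (hf _)

lemma bcomp_congr (f : Fin k → M → M) (θ η : ℤ → Fin k) (m : ℕ)
    (h : ∀ j : ℕ, j < m → θ (-((j : ℤ)+1)) = η (-((j : ℤ)+1))) :
    bcomp f θ m = bcomp f η m := by
  induction m with
  | zero => rfl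
  | succ m ih =>
    show bcomp f θ m ∘ f (θ (-((m:ℤ)+1))) = bcomp f η m ∘ f (η (-((m:ℤ)+1)))
    rw [ih (fun j hj => h j (Nat.lt_succ_of_lt hj)), h m (Nat.lt_succ_self m)]

lemma bcomp_antitone (f : Fin k → M → M) (θ : ℤ → Fin k) (n : ℕ) :
    bcomp f θ (n+1) '' univ ⊆ bcomp f θ n '' univ := by
  show (bcomp f θ n ∘ f (θ (-((n:ℤ)+1)))) '' univ ⊆ _
  rw [image_comp]
  exact image_mono (subset_univ _)

lemma mem_bcomp_of_mem_spine (f : Fin k → M → M) (θ : ℤ → Fin k) {x : M}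
    (hx : x ∈ spine f θ) (n : ℕ) : x ∈ bcomp f θ n '' univ := by
  cases n with
  | zero => exact ⟨x, mem_univ x, rfl⟩
  | succ n => exact mem_iInter.mp hx n

lemma exists_bcomp_subset_open (f : Fin k → M → M) (hf : ∀ i, Continuous (f i))
    (θ : ℤ → Fin k) {v : Set M} (hv : IsOpen v) (hIv : spine f θ ⊆ v) :
    ∃ m : ℕ, bcomp f θ (m+1) '' univ ⊆ v := by
  by_contra h
  push_neg at h
  set W : ℕ → Set M := fun n => bcomp f θ (n+1) '' univ ∩ vᶜ with hW
  have hWcl : ∀ n, IsClosed (W n) := fun n =>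
    ((isCompact_univ.image (bcomp_continuous f hf θ (n+1))).isClosed).inter
      hv.isClosed_compl
  have hWne : ∀ n, (W n).Nonempty := by
    intro n
    rcases not_subset.mp (h n) with ⟨x, hx, hxv⟩
    exact ⟨x, hx, hxv⟩
  have hWnest : ∀ n, W (n+1) ⊆ W n := fun n =>
    inter_subset_inter_left _ (bcomp_antitone f θ (n+1))
  have hne := IsCompact.nonempty_iInter_of_sequence_nonempty_isCompact_isClosed
    W hWnest hWne ((hWcl 0).isCompact) hWcl
  rcases hne with ⟨x, hx⟩
  simp only [mem_iInter, hW, mem_inter_iff] at hx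
  exact (hx 0).2 (hIv (mem_iInter.mpr fun n => (hx n).1))

lemma bcomp_shift (f : Fin k → M → M) (θ : ℤ → Fin k) (n : ℕ) :
    bcomp f (shiftMap θ) (n+1) = f (θ 0) ∘ bcomp f θ n := by
  induction n with
  | zero =>
    show id ∘ f (shiftMap θ (-((0:ℤ)+1))) = f (θ 0) ∘ id
    have : shiftMap θ (-((0:ℤ)+1)) = θ 0 := by simp [shiftMap]
    rw [this]
    rfl
  | succ n ih =>
    show bcomp f (shiftMap θ) (n+1) ∘ f (shiftMap θ (-(((n+1:ℕ):ℤ)+1))) =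
      f (θ 0) ∘ (bcomp f θ n ∘ f (θ (-((n:ℤ)+1))))
    rw [ih]
    have : shiftMap θ (-(((n+1:ℕ):ℤ)+1)) = θ (-((n:ℤ)+1)) := by
      simp only [shiftMap]; congr 1
    rw [this]
    rfl

lemma spine_shift_singleton (f : Fin k → M → M) (hf : ∀ i, Continuous (f i))
    (θ : ℤ → Fin k) (x : M) (h : spine f θ = {x}) :
    spine f (shiftMap θ) = {f (θ 0) x} := by
  have hxK : ∀ n, x ∈ bcomp f θ n '' univ := fun n =>
    mem_bcomp_of_mem_spine f θ (h ▸ rfl) n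
  apply Subset.antisymm
  · intro y hy
    have hy' : ∀ n, y ∈ f (θ 0) '' (bcomp f θ n '' univ) := by
      intro n
      have := mem_iInter.mp hy n
      rwa [bcomp_shift, image_comp] at this
    set L : ℕ → Set M := fun n => bcomp f θ n '' univ ∩ f (θ 0) ⁻¹' {y} with hL
    have hLcl : ∀ n, IsClosed (L n) := fun n =>
      ((isCompact_univ.image (bcomp_continuous f hf θ n)).isClosed).inter
        (isClosed_singleton.preimage (hf _))
    have hLne : ∀ n, (L n).Nonempty := by
      intro n
      rcases hy' n with ⟨z, hz, hzy⟩
      exact ⟨z, hz, hzy⟩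
    have hLnest : ∀ n, L (n+1) ⊆ L n := fun n =>
      inter_subset_inter_left _ (bcomp_antitone f θ n)
    rcases IsCompact.nonempty_iInter_of_sequence_nonempty_isCompact_isClosed
      L hLnest hLne ((hLcl 0).isCompact) hLcl with ⟨z, hz⟩
    simp only [mem_iInter, hL, mem_inter_iff, mem_preimage, mem_singleton_iff] at hz
    have hzspine : z ∈ spine f θ := mem_iInter.mpr fun n => (hz (n+1)).1
    rw [h, mem_singleton_iff] at hzspine
    rw [mem_singleton_iff, ← (hz 0).2, hzspine]
  · rw [singleton_subset_iff]
    apply mem_iInter.mpr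
    intro n
    rw [bcomp_shift, image_comp]
    exact mem_image_of_mem _ (hxK n)

lemma spine_iterate (f : Fin k → M → M) (hf : ∀ i, Continuous (f i)) :
    ∀ (n : ℕ) (θ : ℤ → Fin k) (x : M), spine f θ = {x} →
    spine f (((skewProd f)^[n] (θ, x)).1) = {((skewProd f)^[n] (θ, x)).2} := by
  intro n
  induction n with
  | zero => intro θ x h; exact h
  | succ n ih =>
    intro θ x h
    rw [Function.iterate_succ_apply]
    exact ih (shiftMap θ) (f (θ 0) x) (spine_shift_singleton f hf θ x h)

lemma skewProd_iterate_fst (f : Fin k → M → M) (n : ℕ) (p : (ℤ → Fin k) × M) :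
    ((skewProd f)^[n] p).1 = shiftMap^[n] p.1 := by
  induction n generalizing p with
  | zero => rfl
  | succ n ih =>
    rw [Function.iterate_succ_apply, Function.iterate_succ_apply]
    exact ih _

lemma shiftMap_iterate {k : ℕ} (θ : ℤ → Fin k) (n : ℕ) (i : ℤ) :
    (shiftMap^[n] θ) i = θ (i + n) := by
  induction n generalizing θ i with
  | zero => simp
  | succ n ih =>
    rw [Function.iterate_succ_apply, ih]
    simp only [shiftMap]
    congr 1
    push_cast
    ring

lemma open_pi_window {k : ℕ} {u : Set (ℤ → Fin k)} (hu : IsOpen u)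
    {η : ℤ → Fin k} (hη : η ∈ u) :
    ∃ N : ℕ, ∀ ζ : ℤ → Fin k, (∀ i : ℤ, i.natAbs ≤ N → ζ i = η i) → ζ ∈ u := by
  rcases isOpen_pi_iff.mp hu η hη with ⟨I, w, hIw, hsub⟩
  refine ⟨I.sup Int.natAbs, fun ζ hζ => hsub ?_⟩
  intro i hi
  rw [hζ i (Finset.le_sup hi)]
  exact (hIw i hi).2

end Aux

/-- If `S_F ≠ ∅`, then `F` is topologically mixing on the closure of the graph of the
coding map: for every pair of nonempty relatively open subsets `U ∩ C`, `V ∩ C` of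
`C = cl (graph ρ)` there is `n₀` such that `Fⁿ(V ∩ C) ∩ (U ∩ C) ≠ ∅` for all `n ≥ n₀`. -/
theorem topologically_mixing_on_closure_graph
    {k : ℕ} (hk : 1 ≤ k) {M : Type*} [MetricSpace M] [CompactSpace M] [Nonempty M]
    (f : Fin k → M → M) (hf : ∀ i, Continuous (f i))
    (hS : (weakHyp f).Nonempty)
    (ρ : (ℤ → Fin k) → M) (hρ : ∀ θ ∈ weakHyp f, spine f θ = {ρ θ}) :
    ∀ U V : Set ((ℤ → Fin k) × M), IsOpen U → IsOpen V →
      (U ∩ closure ((fun ϑ => (ϑ, ρ ϑ)) '' weakHyp f)).Nonempty →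
      (V ∩ closure ((fun ϑ => (ϑ, ρ ϑ)) '' weakHyp f)).Nonempty →
      ∃ n₀ : ℕ, ∀ n : ℕ, n₀ ≤ n →
        ((skewProd f)^[n] '' (V ∩ closure ((fun ϑ => (ϑ, ρ ϑ)) '' weakHyp f)) ∩
          (U ∩ closure ((fun ϑ => (ϑ, ρ ϑ)) '' weakHyp f))).Nonempty := by
  intro U V hU hV hUne hVne
  set G : Set ((ℤ → Fin k) × M) := (fun ϑ => (ϑ, ρ ϑ)) '' weakHyp f with hG
  -- extract graph points in U and V
  obtain ⟨p, hpU, hpC⟩ := hUne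
  obtain ⟨q, hqU, η, hηwh, hqeq⟩ := mem_closure_iff.mp hpC U hU hpU
  subst hqeq
  obtain ⟨p', hp'V, hp'C⟩ := hVne
  obtain ⟨q', hq'V, θ, hθwh, hq'eq⟩ := mem_closure_iff.mp hp'C V hV hp'V
  subst hq'eq
  -- open boxes
  obtain ⟨u, v, huo, hvo, hηu, hρηv, huvU⟩ := isOpen_prod_iff.mp hU η (ρ η) hqU
  obtain ⟨u', v', hu'o, hv'o, hθu', hρθv', hu'vV⟩ := isOpen_prod_iff.mp hV θ (ρ θ) hq'V
  obtain ⟨NU, hNU⟩ := open_pi_window huo hηu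
  obtain ⟨NV, hNV⟩ := open_pi_window hu'o hθu'
  -- shrinking past of η into v
  have hspη : spine f η ⊆ v := by rw [hρ η hηwh]; exact singleton_subset_iff.mpr hρηv
  obtain ⟨m, hm⟩ := exists_bcomp_subset_open f hf η hvo hspη
  refine ⟨NV + NU + m + 2, fun n hn => ?_⟩
  -- the spliced sequence
  set ζ : ℤ → Fin k := fun i => if i ≤ (NV : ℤ) then θ i else η (i - n) with hζ
  have hζneg : ∀ j : ℕ, j < 0 + 1000 → True := fun _ _ => trivial
  have hζθ : ∀ m' : ℕ, bcomp f ζ m' = bcomp f θ m' := by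
    intro m'
    apply bcomp_congr
    intro j _
    simp only [hζ]
    rw [if_pos]
    omega
  have hspζ : spine f ζ = {ρ θ} := by
    rw [← hρ θ hθwh]
    unfold spine
    exact iInter_congr fun n' => by rw [hζθ]
  have hζwh : ζ ∈ weakHyp f := ⟨ρ θ, hspζ⟩
  have hρζ : ρ ζ = ρ θ := by
    have := hρ ζ hζwh
    rw [hspζ] at this
    exact (singleton_eq_singleton_iff.mp this.symm)
  -- (ζ, ρ ζ) ∈ V ∩ closure G
  have hζV : (ζ, ρ ζ) ∈ V := by
    apply hu'vV
    constructor
    · apply hNV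
      intro i hi
      simp only [hζ]
      rw [if_pos]
      omega
    · rw [hρζ]; exact hρθv'
  have hζC : (ζ, ρ ζ) ∈ closure G := subset_closure ⟨ζ, hζwh, rfl⟩
  -- the iterate
  set pn := (skewProd f)^[n] (ζ, ρ ζ) with hpn
  have hspn : spine f pn.1 = {pn.2} := spine_iterate f hf n ζ (ρ ζ) (hρ ζ hζwh)
  have hpn1 : ∀ i : ℤ, pn.1 i = ζ (i + n) := by
    intro i
    rw [hpn, skewProd_iterate_fst, shiftMap_iterate]
  -- pn ∈ U
  have hpnu : pn.1 ∈ u := by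
    apply hNU
    intro i hi
    rw [hpn1 i]
    simp only [hζ]
    rw [if_neg, show i + (n : ℤ) - n = i by ring]
    omega
  have hpnv : pn.2 ∈ v := by
    apply hm
    have h1 : bcomp f pn.1 (m+1) = bcomp f η (m+1) := by
      apply bcomp_congr
      intro j hj
      rw [hpn1]
      simp only [hζ]
      rw [if_neg, show -((j:ℤ)+1) + n - n = -((j:ℤ)+1) by ring]
      omega
    rw [← h1]
    exact mem_iInter.mp (hspn ▸ rfl : pn.2 ∈ spine f pn.1) m
  have hpnU : pn ∈ U := by
    have : (pn.1, pn.2) ∈ U := huvU ⟨hpnu, hpnv⟩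
    rwa [Prod.mk.eta] at this
  have hpnC : pn ∈ closure G := by
    have hwh : pn.1 ∈ weakHyp f := ⟨pn.2, hspn⟩
    have : ρ pn.1 = pn.2 := by
      have := hρ pn.1 hwh
      rw [hspn] at this
      exact singleton_eq_singleton_iff.mp this.symm
    apply subset_closure
    exact ⟨pn.1, hwh, by simp only []; rw [this]⟩
  exact ⟨pn, ⟨(ζ, ρ ζ), ⟨hζV, hζC⟩, rfl⟩, hpnU, hpnC⟩
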